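/- Let E1, E2 be i.i.d. exponential random variables with rate 1 and U1, U2 be i.i.d. uniform random variables on [0,1], with all four variables mutually independent. Then the random variable (E1/U1)·(1 − U1·U2) has the same distribution as the random variable (E1 + E2/U1)·(1 − U1). -/

import Mathlib

open MeasureTheory ProbabilityTheory
open Real Set
open scoped ENNReal

lemma lintegral_image_eq_lintegral_abs_deriv_mul' {s : Set ℝ} {f f' : ℝ → ℝ}
    (hs : MeasurableSet s) (hf' : ∀ x ∈ s, HasDerivWithinAt f (f' x) s x) (hf : InjOn f s)
    (g : ℝ → ℝ≥0∞) :
    ∫⁻ x in f '' s, g x = ∫⁻ x in s, ENNReal.ofReal |f' x| * g (f x) := by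
  simpa only [ContinuousLinearMap.det_toSpanSingleton] using
    lintegral_image_eq_lintegral_abs_det_fderiv_mul volume hs
      (fun x hx => (hf' x hx).hasFDerivWithinAt) hf g

lemma expMeasure_lintegral (f : ℝ → ℝ≥0∞) (hf : Measurable f) :
    ∫⁻ x, f x ∂(expMeasure 1) = ∫⁻ x in Ioi (0:ℝ), ENNReal.ofReal (exp (-x)) * f x := by
  have hm : Measurable (gammaPDF 1 1) := by
    unfold gammaPDF; exact (measurable_gammaPDFReal 1 1).ennreal_ofReal
  rw [expMeasure, gammaMeasure,
    lintegral_withDensity_eq_lintegral_mul _ hm hf,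
    ← lintegral_indicator (measurableSet_Ioi (a := (0:ℝ)))]
  refine lintegral_congr_ae ?_
  filter_upwards [compl_mem_ae_iff.2 (volume_singleton (a := (0:ℝ)))] with x hx
  by_cases hx0 : 0 < x
  · simp only [indicator_of_mem (mem_Ioi.2 hx0), Pi.mul_apply, gammaPDF_eq, if_pos hx0.le]
    norm_num [Real.Gamma_one]
  · have hxlt : x < 0 := lt_of_le_of_ne (not_lt.1 hx0) (by simpa using hx)
    simp only [indicator_of_notMem (by simpa using hx0 : x ∉ Ioi (0:ℝ)), Pi.mul_apply,
      gammaPDF_of_neg hxlt, zero_mul]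

lemma integrableOn_exp_neg_Ioi' (c : ℝ) : IntegrableOn (fun x => exp (-x)) (Ioi c) := by
  simpa using exp_neg_integrableOn_Ioi c one_pos

lemma lintegral_exp_neg_Ioi (c : ℝ) :
    ∫⁻ x in Ioi c, ENNReal.ofReal (exp (-x)) = ENNReal.ofReal (exp (-c)) := by
  rw [← ofReal_integral_eq_lintegral_ofReal (integrableOn_exp_neg_Ioi' c)
    (ae_of_all _ fun x => (exp_pos _).le), integral_exp_neg_Ioi]

lemma expMeasure_Ioi (a : ℝ) :
    expMeasure 1 (Ioi a) = ENNReal.ofReal (exp (-(max a 0))) := by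
  rw [← lintegral_indicator_one measurableSet_Ioi]
  rw [show ((Ioi a).indicator (1 : ℝ → ℝ≥0∞)) = (Ioi a).indicator (fun _ => (1:ℝ≥0∞)) from rfl]
  rw [expMeasure_lintegral _ ((measurable_indicator_const_iff 1).2 measurableSet_Ioi)]
  have : ∀ x, ENNReal.ofReal (exp (-x)) * (Ioi a).indicator (fun _ => (1:ℝ≥0∞)) x
      = (Ioi a).indicator (fun x => ENNReal.ofReal (exp (-x))) x := by
    intro x
    by_cases hx : x ∈ Ioi a <;> simp [hx]
  simp_rw [this]
  rw [lintegral_indicator measurableSet_Ioi, Measure.restrict_restrict measurableSet_Ioi,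
    Ioi_inter_Ioi, lintegral_exp_neg_Ioi]

noncomputable def rhoAux (w : ℝ) : ℝ := if w < 1 then 1/(1+w) else 1/(w^2*(1+w))

lemma rhoAux_measurable : Measurable rhoAux := by
  unfold rhoAux
  apply Measurable.ite (measurableSet_Iio) <;> fun_prop

lemma image_uv : (fun u : ℝ => u / (1 - u)) '' Ioo (0:ℝ) 1 = Ioi 0 := by
  ext w
  constructor
  · rintro ⟨u, ⟨h0, h1⟩, rfl⟩
    exact div_pos h0 (by linarith)
  · intro (hw : 0 < w)
    refine ⟨w / (1 + w), ⟨div_pos hw (by linarith), ?_⟩, ?_⟩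
    · rw [div_lt_one (by linarith)]; linarith
    · have h1w : (1:ℝ) + w ≠ 0 := by positivity
      have h2 : 1 - w / (1 + w) = 1 / (1 + w) := by field_simp; ring
      show w / (1 + w) / (1 - w / (1 + w)) = w
      rw [h2]
      field_simp

lemma hasDeriv_uv {u : ℝ} (hu : u ∈ Ioo (0:ℝ) 1) :
    HasDerivAt (fun u : ℝ => u / (1 - u)) (1/(1-u)^2) u := by
  obtain ⟨h0, h1⟩ := hu
  have := (hasDerivAt_id u).div ((hasDerivAt_id u).const_sub 1) (by intro h; simp at h; linarith)
  refine this.congr_deriv ?_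
  simp only [id]
  field_simp
  ring

lemma inj_uv : InjOn (fun u : ℝ => u / (1 - u)) (Ioo (0:ℝ) 1) := by
  intro a ⟨a0, a1⟩ b ⟨b0, b1⟩ hab
  simp only at hab
  rw [div_eq_div_iff (by linarith) (by linarith)] at hab
  nlinarith

lemma keyY_cov (t : ℝ) :
    ∫⁻ u in Ioo (0:ℝ) 1,
      ENNReal.ofReal ((exp (-(t*u/(1-u))) - u * exp (-(t/(1-u))))/(1-u))
      = ∫⁻ w in Ioi (0:ℝ),
      ENNReal.ofReal ((exp (-(t*w)) - w/(1+w) * exp (-(t*(1+w))))/(1+w)) := by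
  rw [← image_uv, lintegral_image_eq_lintegral_abs_deriv_mul' measurableSet_Ioo
    (fun u hu => (hasDeriv_uv hu).hasDerivWithinAt) inj_uv]
  apply setLIntegral_congr_fun measurableSet_Ioo
  intro u hu
  obtain ⟨h0, h1⟩ := hu
  have h1u : (0:ℝ) < 1 - u := by linarith
  have hw1 : 1 + u/(1-u) = 1/(1-u) := by field_simp; ring
  have hw2 : u/(1-u) / (1 + u/(1-u)) = u := by rw [hw1]; field_simp
  have hw3 : t * (1 + u/(1-u)) = t/(1-u) := by rw [hw1]; ring
  have hw4 : t * (u/(1-u)) = t*u/(1-u) := by ring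
  simp only [hw1, hw2, hw3, hw4]
  rw [← ENNReal.ofReal_mul (abs_nonneg _)]
  congr 1
  rw [abs_of_pos (by positivity)]
  field_simp

lemma keyY_shift (t : ℝ) :
    ∫⁻ w in Ioi (0:ℝ), ENNReal.ofReal (exp (-(t*(1+w))) * (w/(1+w)^2))
      = ∫⁻ w in Ioi (1:ℝ), ENNReal.ofReal (exp (-(t*w)) * ((w-1)/w^2)) := by
  have himg : (fun w : ℝ => 1 + w) '' Ioi 0 = Ioi 1 := by
    rw [image_const_add_Ioi]; norm_num
  have hd : ∀ x ∈ Ioi (0:ℝ), HasDerivWithinAt (fun w : ℝ => 1 + w) ((fun _ => (1:ℝ)) x) (Ioi 0) x :=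
    fun x _ => by simpa using ((hasDerivAt_id x).const_add 1).hasDerivWithinAt
  rw [← himg, lintegral_image_eq_lintegral_abs_deriv_mul' measurableSet_Ioi hd
    (fun a _ b _ h => by simpa using h)]
  apply setLIntegral_congr_fun measurableSet_Ioi
  intro w hw
  norm_num

lemma keyY_fin (t : ℝ) (ht : 0 < t) :
    ∫⁻ w in Ioi (0:ℝ), ENNReal.ofReal (exp (-(t*(1+w))) * (w/(1+w)^2)) ≠ ⊤ := by
  have hb : ∫⁻ w in Ioi (0:ℝ), ENNReal.ofReal (exp (-(t*w))) < ⊤ := by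
    have hi : IntegrableOn (fun x : ℝ => exp (-(t*x))) (Ioi 0) := by
      simpa [neg_mul] using exp_neg_integrableOn_Ioi 0 ht
    exact hi.setLIntegral_lt_top
  refine ne_of_lt (lt_of_le_of_lt (setLIntegral_mono' measurableSet_Ioi ?_) hb)
  intro w hw
  have hw0 : (0:ℝ) < w := hw
  apply ENNReal.ofReal_le_ofReal
  have h1 : w/(1+w)^2 ≤ 1 := by
    rw [div_le_one (by positivity)]
    nlinarith
  have h2 : exp (-(t*(1+w))) ≤ exp (-(t*w)) := by
    apply exp_le_exp.2; nlinarith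
  calc exp (-(t*(1+w))) * (w/(1+w)^2) ≤ exp (-(t*(1+w))) * 1 := by
        apply mul_le_mul_of_nonneg_left h1 (exp_pos _).le
    _ ≤ exp (-(t*w)) := by rw [mul_one]; exact h2

lemma split_Ioi (F : ℝ → ℝ≥0∞) :
    ∫⁻ w in Ioi (0:ℝ), F w = (∫⁻ w in Ioo (0:ℝ) 1, F w) + ∫⁻ w in Ioi (1:ℝ), F w := by
  have hdisj : Disjoint (Ioo (0:ℝ) 1) (Ici (1:ℝ)) := by
    rw [Set.disjoint_left]
    rintro x ⟨_, h1⟩ h2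
    exact absurd h2 (not_le.2 h1)
  have hIci : volume.restrict (Ici (1:ℝ)) = volume.restrict (Ioi 1) :=
    (Measure.restrict_congr_set Ioi_ae_eq_Ici).symm
  rw [← Ioo_union_Ici_eq_Ioi (zero_lt_one (α := ℝ)), lintegral_union measurableSet_Ici hdisj, hIci]

lemma keyY (t : ℝ) (ht : 0 < t) :
    ∫⁻ u in Ioo (0:ℝ) 1,
      ENNReal.ofReal ((exp (-(t*u/(1-u))) - u * exp (-(t/(1-u))))/(1-u))
      = ∫⁻ w in Ioi (0:ℝ), ENNReal.ofReal (exp (-(t*w)) * rhoAux w) := by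
  have hGm : Measurable (fun w : ℝ =>
      ENNReal.ofReal ((exp (-(t*w)) - w/(1+w) * exp (-(t*(1+w))))/(1+w))) := by fun_prop
  have hRhom : Measurable (fun w : ℝ => ENNReal.ofReal (exp (-(t*w)) * rhoAux w)) := by
    apply Measurable.ennreal_ofReal
    exact (measurable_exp.comp (by fun_prop)).mul rhoAux_measurable
  have hGP : (∫⁻ w in Ioi (0:ℝ),
        ENNReal.ofReal ((exp (-(t*w)) - w/(1+w) * exp (-(t*(1+w))))/(1+w)))
      + (∫⁻ w in Ioi (0:ℝ), ENNReal.ofReal (exp (-(t*(1+w))) * (w/(1+w)^2)))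
      = ∫⁻ w in Ioi (0:ℝ), ENNReal.ofReal (exp (-(t*w)) / (1+w)) := by
    rw [← lintegral_add_left hGm]
    apply setLIntegral_congr_fun measurableSet_Ioi
    intro w hw
    beta_reduce
    have hw0 : (0:ℝ) < w := hw
    have h1w : (0:ℝ) < 1 + w := by linarith
    have hnn : 0 ≤ (exp (-(t*w)) - w/(1+w) * exp (-(t*(1+w))))/(1+w) := by
      apply div_nonneg _ h1w.le
      have h1 : w/(1+w) ≤ 1 := by rw [div_le_one h1w]; linarith
      have h2 : exp (-(t*(1+w))) ≤ exp (-(t*w)) := by apply exp_le_exp.2; nlinarith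
      nlinarith [exp_pos (-(t*(1+w))), exp_pos (-(t*w))]
    rw [← ENNReal.ofReal_add hnn (by positivity)]
    congr 1
    field_simp
    ring
  have e1 : ∫⁻ w in Ioo (0:ℝ) 1, ENNReal.ofReal (exp (-(t*w)) * rhoAux w)
      = ∫⁻ w in Ioo (0:ℝ) 1, ENNReal.ofReal (exp (-(t*w)) / (1+w)) := by
    apply setLIntegral_congr_fun measurableSet_Ioo
    intro w hw
    beta_reduce
    rw [rhoAux, if_pos hw.2, mul_one_div]
  have e2 : (∫⁻ w in Ioi (1:ℝ), ENNReal.ofReal (exp (-(t*w)) * rhoAux w))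
      + (∫⁻ w in Ioi (1:ℝ), ENNReal.ofReal (exp (-(t*w)) * ((w-1)/w^2)))
      = ∫⁻ w in Ioi (1:ℝ), ENNReal.ofReal (exp (-(t*w)) / (1+w)) := by
    rw [← lintegral_add_left hRhom]
    apply setLIntegral_congr_fun measurableSet_Ioi
    intro w hw
    beta_reduce
    have hw1 : (1:ℝ) < w := hw
    have hw0 : (0:ℝ) < w := by linarith
    rw [rhoAux, if_neg (not_lt.2 hw1.le)]
    rw [← ENNReal.ofReal_add (by positivity)
      (mul_nonneg (exp_pos _).le (div_nonneg (by linarith) (by positivity)))]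
    congr 1
    rw [← mul_add, show 1/(w^2*(1+w)) + (w-1)/w^2 = 1/(1+w) by field_simp; ring, mul_one_div]
  have hRQ : (∫⁻ w in Ioi (0:ℝ), ENNReal.ofReal (exp (-(t*w)) * rhoAux w))
      + (∫⁻ w in Ioi (0:ℝ), ENNReal.ofReal (exp (-(t*(1+w))) * (w/(1+w)^2)))
      = ∫⁻ w in Ioi (0:ℝ), ENNReal.ofReal (exp (-(t*w)) / (1+w)) := by
    rw [split_Ioi (fun w => ENNReal.ofReal (exp (-(t*w)) / (1+w))),
      split_Ioi (fun w => ENNReal.ofReal (exp (-(t*w)) * rhoAux w)),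
      keyY_shift t, e1, ← e2]
    ring
  rw [keyY_cov t]
  exact (ENNReal.add_left_inj (keyY_fin t ht)).1 (hGP.trans hRQ.symm)

lemma image_vw {u : ℝ} (hu : u ∈ Ioo (0:ℝ) 1) :
    (fun v : ℝ => u / (1 - u * v)) '' Ioo (0:ℝ) 1 = Ioo u (u/(1-u)) := by
  obtain ⟨h0, h1⟩ := hu
  ext w
  constructor
  · rintro ⟨v, ⟨v0, v1⟩, rfl⟩
    have huv : u * v < 1 := by nlinarith
    have hd : (0:ℝ) < 1 - u * v := by linarith
    constructor
    · rw [lt_div_iff₀ hd]; nlinarith [mul_pos h0 (mul_pos h0 v0)]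
    · rw [div_lt_div_iff₀ hd (by linarith)]
      nlinarith [mul_pos (mul_pos h0 h0) (by linarith : (0:ℝ) < 1 - v)]
  · rintro ⟨hw1, hw2⟩
    have hw0 : (0:ℝ) < w := lt_trans h0 hw1
    have hwu : w * (1 - u) < u := (lt_div_iff₀ (by linarith)).1 hw2
    refine ⟨(w - u)/(u*w), ⟨div_pos (by linarith) (by positivity), ?_⟩, ?_⟩
    · rw [div_lt_one (by positivity)]; nlinarith
    · have : 1 - u * ((w - u)/(u*w)) = u / w := by field_simp; ring
      simp only [this]
      rw [div_div_eq_mul_div, mul_comm, mul_div_assoc, div_self (ne_of_gt h0), mul_one]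

lemma keyX_inner {t u : ℝ} (hu : u ∈ Ioo (0:ℝ) 1) :
    ∫⁻ v in Ioo (0:ℝ) 1, ENNReal.ofReal (exp (-(t*u/(1-u*v))))
      = ∫⁻ w in Ioo u (u/(1-u)), ENNReal.ofReal (exp (-(t*w)) / w^2) := by
  obtain ⟨h0, h1⟩ := hu
  have hd : ∀ v ∈ Ioo (0:ℝ) 1, HasDerivWithinAt (fun v : ℝ => u / (1 - u * v))
      ((fun v => u^2/(1-u*v)^2) v) (Ioo (0:ℝ) 1) v := by
    intro v ⟨v0, v1⟩
    have huv : u * v < 1 := by nlinarith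
    have := (hasDerivAt_const v u).div (((hasDerivAt_id v).const_mul u).const_sub 1)
      (by intro h; simp at h; linarith)
    refine HasDerivAt.hasDerivWithinAt (by refine this.congr_deriv ?_; simp only [id]; field_simp; ring)
  have hinj : InjOn (fun v : ℝ => u / (1 - u * v)) (Ioo (0:ℝ) 1) := by
    intro a ⟨a0, a1⟩ b ⟨b0, b1⟩ hab
    have hua : u * a < 1 := by nlinarith
    have hub : u * b < 1 := by nlinarith
    simp only at hab
    rw [div_eq_div_iff (by linarith) (by linarith)] at hab
    have : u * (u * b) = u * (u * a) := by linarith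
    have := mul_left_cancel₀ (ne_of_gt h0) (mul_left_cancel₀ (ne_of_gt h0) this)
    linarith
  rw [← image_vw ⟨h0, h1⟩, lintegral_image_eq_lintegral_abs_deriv_mul' measurableSet_Ioo hd hinj]
  apply setLIntegral_congr_fun measurableSet_Ioo
  rintro v ⟨v0, v1⟩
  beta_reduce
  have huv : u * v < 1 := by nlinarith
  have hdv : (0:ℝ) < 1 - u * v := by linarith
  rw [← ENNReal.ofReal_mul (abs_nonneg _)]
  congr 1
  rw [abs_of_pos (by positivity), div_pow,
    mul_div_cancel₀ _ (ne_of_gt (by positivity : (0:ℝ) < u^2/(1-u*v)^2))]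
  ring_nf

lemma keyX_swap (t : ℝ) :
    ∫⁻ u in Ioo (0:ℝ) 1, ∫⁻ w in Ioo u (u/(1-u)), ENNReal.ofReal (exp (-(t*w)) / w^2)
      = ∫⁻ w in Ioi (0:ℝ), ENNReal.ofReal (exp (-(t*w)) * rhoAux w) := by
  set g : ℝ → ℝ≥0∞ := fun w => ENNReal.ofReal (exp (-(t*w)) / w^2) with hg
  have hgm : Measurable g := by fun_prop
  set S : Set (ℝ × ℝ) := {p | 0 < p.1 ∧ p.1 < 1 ∧ p.1 < p.2 ∧ p.2 * (1 - p.1) < p.1} with hS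
  have hSm : MeasurableSet S := by
    apply MeasurableSet.inter (measurableSet_lt measurable_const measurable_fst)
    apply MeasurableSet.inter (measurableSet_lt measurable_fst measurable_const)
    exact MeasurableSet.inter (measurableSet_lt measurable_fst measurable_snd)
      (measurableSet_lt (by fun_prop) measurable_fst)
  have hFm : Measurable (fun p : ℝ × ℝ => S.indicator (fun q => g q.2) p) :=
    (hgm.comp measurable_snd).indicator hSm
  have h1 : ∀ u : ℝ, (∫⁻ w, S.indicator (fun q => g q.2) (u, w))
      = (Ioo (0:ℝ) 1).indicator (fun u => ∫⁻ w in Ioo u (u/(1-u)), g w) u := by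
    intro u
    by_cases hu : u ∈ Ioo (0:ℝ) 1
    · obtain ⟨h0, h1⟩ := hu
      have hslice : ∀ w, ((u, w) ∈ S ↔ w ∈ Ioo u (u/(1-u))) := by
        intro w
        simp only [hS, mem_setOf_eq, mem_Ioo]
        constructor
        · rintro ⟨_, _, h3, h4⟩
          exact ⟨h3, (lt_div_iff₀ (by linarith)).2 h4⟩
        · rintro ⟨h3, h4⟩
          exact ⟨h0, h1, h3, (lt_div_iff₀ (by linarith)).1 h4⟩
      rw [indicator_of_mem (show u ∈ Ioo (0:ℝ) 1 from ⟨h0, h1⟩), ← lintegral_indicator measurableSet_Ioo]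
      congr 1
      funext w
      simp only [indicator_apply, hslice w]
    · rw [indicator_of_notMem hu]
      have : ∀ w, S.indicator (fun q : ℝ × ℝ => g q.2) (u, w) = 0 := by
        intro w
        apply indicator_of_notMem
        intro hmem
        exact hu ⟨hmem.1, hmem.2.1⟩
      simp [this]
  have h2 : ∀ w : ℝ, (∫⁻ u, S.indicator (fun q => g q.2) (u, w))
      = (Ioi (0:ℝ)).indicator (fun w => g w * ENNReal.ofReal (min w 1 - w/(1+w))) w := by
    intro w
    by_cases hw : w ∈ Ioi (0:ℝ)
    · have hw0 : (0:ℝ) < w := hw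
      have h1w : (0:ℝ) < 1 + w := by linarith
      have hslice : ∀ u, ((u, w) ∈ S ↔ u ∈ Ioo (w/(1+w)) (min w 1)) := by
        intro u
        simp only [hS, mem_setOf_eq, mem_Ioo, lt_min_iff]
        constructor
        · rintro ⟨u0, u1, uw, hwu⟩
          refine ⟨(div_lt_iff₀ h1w).2 (by nlinarith), uw, u1⟩
        · rintro ⟨hlo, hw', h1'⟩
          have hu0 : 0 < u := lt_trans (by positivity) hlo
          refine ⟨hu0, h1', hw', by nlinarith [(div_lt_iff₀ h1w).1 hlo]⟩
      have : (fun u => S.indicator (fun q : ℝ × ℝ => g q.2) (u, w))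
          = (Ioo (w/(1+w)) (min w 1)).indicator (fun _ => g w) := by
        funext u
        simp only [indicator_apply, hslice u]
      rw [this, lintegral_indicator_const measurableSet_Ioo, Real.volume_Ioo,
        indicator_of_mem hw]
    · rw [indicator_of_notMem hw]
      have hw0 : w ≤ 0 := not_lt.1 hw
      have : ∀ u, S.indicator (fun q : ℝ × ℝ => g q.2) (u, w) = 0 := by
        intro u
        apply indicator_of_notMem
        rintro ⟨u0, _, uw, _⟩
        exact absurd (lt_trans u0 uw) (not_lt.2 hw0)
      simp [this]
  calc ∫⁻ u in Ioo (0:ℝ) 1, ∫⁻ w in Ioo u (u/(1-u)), g w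
      = ∫⁻ u, (Ioo (0:ℝ) 1).indicator (fun u => ∫⁻ w in Ioo u (u/(1-u)), g w) u := by
        rw [lintegral_indicator measurableSet_Ioo]
    _ = ∫⁻ u, ∫⁻ w, S.indicator (fun q => g q.2) (u, w) := by simp_rw [h1]
    _ = ∫⁻ w, ∫⁻ u, S.indicator (fun q => g q.2) (u, w) := by
        exact lintegral_lintegral_swap hFm.aemeasurable
    _ = ∫⁻ w, (Ioi (0:ℝ)).indicator (fun w => g w * ENNReal.ofReal (min w 1 - w/(1+w))) w := by
        simp_rw [h2]
    _ = ∫⁻ w in Ioi (0:ℝ), g w * ENNReal.ofReal (min w 1 - w/(1+w)) := by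
        rw [lintegral_indicator measurableSet_Ioi]
    _ = ∫⁻ w in Ioi (0:ℝ), ENNReal.ofReal (exp (-(t*w)) * rhoAux w) := by
        apply setLIntegral_congr_fun measurableSet_Ioi
        intro w hw
        beta_reduce
        have hw0 : (0:ℝ) < w := hw
        have h1w : (0:ℝ) < 1 + w := by linarith
        rw [hg, ← ENNReal.ofReal_mul (by positivity)]
        congr 1
        rw [rhoAux]
        by_cases hwlt : w < 1
        · rw [if_pos hwlt, min_eq_left hwlt.le]
          rw [show w - w/(1+w) = w^2/(1+w) by field_simp; ring]
          field_simp
        · rw [if_neg hwlt, min_eq_right (not_lt.1 hwlt)]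
          rw [show 1 - w/(1+w) = 1/(1+w) by field_simp; ring]
          field_simp

lemma keyX (t : ℝ) :
    ∫⁻ u in Ioo (0:ℝ) 1, ∫⁻ v in Ioo (0:ℝ) 1, ENNReal.ofReal (exp (-(t*u/(1-u*v))))
      = ∫⁻ w in Ioi (0:ℝ), ENNReal.ofReal (exp (-(t*w)) * rhoAux w) := by
  rw [← keyX_swap t]
  apply setLIntegral_congr_fun measurableSet_Ioo
  exact fun u hu => keyX_inner hu

lemma condY {t u : ℝ} (ht : 0 < t) (hu : u ∈ Ioo (0:ℝ) 1) :
    ∫⁻ e in Ioi (0:ℝ),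
        ENNReal.ofReal (exp (-e)) * ENNReal.ofReal (exp (-(max (t/(1-u) - e/u) 0)))
      = ENNReal.ofReal ((exp (-(t*u/(1-u))) - u * exp (-(t/(1-u))))/(1-u)) := by
  obtain ⟨h0, h1⟩ := hu
  have h1u : (0:ℝ) < 1 - u := by linarith
  set thr : ℝ := t*u/(1-u) with hthr
  have hthr0 : 0 < thr := by positivity
  set c : ℝ := (1-u)/u with hc
  have hc0 : 0 < c := by positivity
  have hsplit : Ioi (0:ℝ) = Ioc 0 thr ∪ Ioi thr := (Ioc_union_Ioi_eq_Ioi hthr0.le).symm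
  rw [hsplit, lintegral_union measurableSet_Ioi
    (by rw [Set.disjoint_left]; rintro x ⟨_, hx⟩ hx'; exact absurd hx' (not_lt.2 hx))]
  have piece1 : ∫⁻ e in Ioc (0:ℝ) thr,
      ENNReal.ofReal (exp (-e)) * ENNReal.ofReal (exp (-(max (t/(1-u) - e/u) 0)))
      = ENNReal.ofReal (u/(1-u) * (exp (-(t*u/(1-u))) - exp (-(t/(1-u))))) := by
    have hcong : ∀ e ∈ Ioc (0:ℝ) thr,
        ENNReal.ofReal (exp (-e)) * ENNReal.ofReal (exp (-(max (t/(1-u) - e/u) 0)))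
        = ENNReal.ofReal (exp (c*e - t/(1-u))) := by
      intro e ⟨he0, he1⟩
      have hmax : max (t/(1-u) - e/u) 0 = t/(1-u) - e/u := by
        apply max_eq_left
        rw [sub_nonneg, div_le_div_iff₀ h0 h1u]
        rw [hthr, le_div_iff₀ h1u] at he1
        linarith
      rw [hmax, ← ENNReal.ofReal_mul (exp_pos _).le, ← exp_add]
      congr 2
      rw [hc]
      field_simp
      ring
    rw [setLIntegral_congr_fun measurableSet_Ioc hcong]
    rw [← ofReal_integral_eq_lintegral_ofReal (f := fun x => exp (c*x - t/(1-u)))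
      ((continuous_exp.comp (by continuity)).integrableOn_Ioc)
      (ae_of_all _ fun x => (exp_pos _).le)]
    congr 1
    rw [← intervalIntegral.integral_of_le hthr0.le]
    have hderiv : ∀ x ∈ uIcc (0:ℝ) thr, HasDerivAt (fun x => exp (c*x - t/(1-u)) / c)
        (exp (c*x - t/(1-u))) x := by
      intro x _
      have : HasDerivAt (fun x : ℝ => c*x - t/(1-u)) c x := by
        simpa using (((hasDerivAt_id x).const_mul c).sub_const (t/(1-u)))
      have := (this.exp).div_const c
      refine this.congr_deriv ?_
      field_simp
    rw [intervalIntegral.integral_eq_sub_of_hasDerivAt hderiv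
      ((continuous_exp.comp (by continuity)).intervalIntegrable _ _)]
    have hct : c * thr = t := by rw [hc, hthr]; field_simp
    rw [hct]
    have h2 : t - t/(1-u) = -(t*u/(1-u)) := by field_simp; ring
    rw [h2]
    rw [hc, mul_zero, zero_sub]
    field_simp
  have piece2 : ∫⁻ e in Ioi thr,
      ENNReal.ofReal (exp (-e)) * ENNReal.ofReal (exp (-(max (t/(1-u) - e/u) 0)))
      = ENNReal.ofReal (exp (-(t*u/(1-u)))) := by
    have hcong : ∀ e ∈ Ioi thr,
        ENNReal.ofReal (exp (-e)) * ENNReal.ofReal (exp (-(max (t/(1-u) - e/u) 0)))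
        = ENNReal.ofReal (exp (-e)) := by
      intro e he
      have he' : thr < e := he
      have hmax : max (t/(1-u) - e/u) 0 = 0 := by
        apply max_eq_right
        rw [sub_nonpos, div_le_div_iff₀ h1u h0]
        rw [hthr, div_lt_iff₀ h1u] at he'
        linarith
      rw [hmax, neg_zero, exp_zero, ENNReal.ofReal_one, mul_one]
    rw [setLIntegral_congr_fun measurableSet_Ioi hcong, lintegral_exp_neg_Ioi]
  have hnn : 0 ≤ u/(1-u) * (exp (-(t*u/(1-u))) - exp (-(t/(1-u)))) := by
    have hle : exp (-(t/(1-u))) ≤ exp (-(t*u/(1-u))) := by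
      apply exp_le_exp.2
      rw [neg_le_neg_iff, div_le_div_iff₀ h1u h1u]
      nlinarith [mul_pos ht (mul_pos h1u h1u)]
    have := sub_nonneg.2 hle
    positivity
  rw [piece1, piece2, ← ENNReal.ofReal_add hnn (exp_pos _).le]
  rw [hthr]
  congr 1
  field_simp
  ring

lemma survX (t : ℝ) (ht : 0 < t) :
    ((expMeasure 1).prod
        ((volume.restrict (Ioo (0:ℝ) 1)).prod (volume.restrict (Ioo (0:ℝ) 1))))
      {p : ℝ × ℝ × ℝ | t < p.1 / p.2.1 * (1 - p.2.1 * p.2.2)}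
      = ∫⁻ w in Ioi (0:ℝ), ENNReal.ofReal (exp (-(t*w)) * rhoAux w) := by
  haveI : IsProbabilityMeasure (expMeasure 1) := isProbabilityMeasure_expMeasure one_pos
  have hsm : MeasurableSet {p : ℝ × ℝ × ℝ | t < p.1 / p.2.1 * (1 - p.2.1 * p.2.2)} :=
    measurableSet_lt measurable_const (by fun_prop)
  rw [Measure.prod_apply_symm hsm]
  have hcong : ∀ᵐ y ∂((volume.restrict (Ioo (0:ℝ) 1)).prod (volume.restrict (Ioo (0:ℝ) 1))),
      expMeasure 1 ((fun x => (x, y)) ⁻¹' {p : ℝ × ℝ × ℝ | t < p.1 / p.2.1 * (1 - p.2.1 * p.2.2)})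
      = ENNReal.ofReal (exp (-(t*y.1/(1-y.1*y.2)))) := by
    rw [Measure.prod_restrict]
    filter_upwards [ae_restrict_mem (measurableSet_Ioo.prod measurableSet_Ioo)] with y hy
    obtain ⟨⟨hu0, hu1⟩, hv0, hv1⟩ := hy
    have huv : y.1 * y.2 < 1 := by nlinarith
    have hd : (0:ℝ) < 1 - y.1 * y.2 := by linarith
    have key : ((fun x => (x, y)) ⁻¹' {p : ℝ × ℝ × ℝ | t < p.1 / p.2.1 * (1 - p.2.1 * p.2.2)})
        = Ioi (t*y.1/(1-y.1*y.2)) := by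
      ext e
      simp only [mem_preimage, mem_setOf_eq, mem_Ioi]
      rw [div_mul_eq_mul_div, lt_div_iff₀ hu0, ← div_lt_iff₀ hd]
    rw [key, expMeasure_Ioi,
      max_eq_left (div_nonneg (by positivity) hd.le)]
  rw [lintegral_congr_ae hcong, lintegral_prod _ (by fun_prop : Measurable fun y : ℝ × ℝ =>
    ENNReal.ofReal (exp (-(t*y.1/(1-y.1*y.2))))).aemeasurable]
  exact keyX t

lemma survY (t : ℝ) (ht : 0 < t) :
    ((expMeasure 1).prod ((expMeasure 1).prod (volume.restrict (Ioo (0:ℝ) 1))))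
      {p : ℝ × ℝ × ℝ | t < (p.1 + p.2.1 / p.2.2) * (1 - p.2.2)}
      = ∫⁻ w in Ioi (0:ℝ), ENNReal.ofReal (exp (-(t*w)) * rhoAux w) := by
  haveI : IsProbabilityMeasure (expMeasure 1) := isProbabilityMeasure_expMeasure one_pos
  have hsm : MeasurableSet {p : ℝ × ℝ × ℝ | t < (p.1 + p.2.1 / p.2.2) * (1 - p.2.2)} :=
    measurableSet_lt measurable_const (by fun_prop)
  have hmint : Measurable fun y : ℝ × ℝ =>
      ENNReal.ofReal (exp (-(max (t/(1-y.2) - y.1/y.2) 0))) := by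
    apply Measurable.ennreal_ofReal
    apply Real.measurable_exp.comp
    exact (((by fun_prop : Measurable fun y : ℝ × ℝ => t/(1-y.2) - y.1/y.2).max
      measurable_const)).neg
  rw [Measure.prod_apply_symm hsm]
  have hae : ∀ᵐ y ∂((expMeasure 1).prod (volume.restrict (Ioo (0:ℝ) 1))),
      y.2 ∈ Ioo (0:ℝ) 1 := by
    rw [ae_iff]
    have : {y : ℝ × ℝ | ¬ y.2 ∈ Ioo (0:ℝ) 1} = univ ×ˢ (Ioo (0:ℝ) 1)ᶜ := by
      ext y; simp [mem_prod]
    rw [this, Measure.prod_prod, Measure.restrict_apply measurableSet_Ioo.compl]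
    simp
  have hcong : ∀ᵐ y ∂((expMeasure 1).prod (volume.restrict (Ioo (0:ℝ) 1))),
      expMeasure 1 ((fun x => (x, y)) ⁻¹'
          {p : ℝ × ℝ × ℝ | t < (p.1 + p.2.1 / p.2.2) * (1 - p.2.2)})
      = ENNReal.ofReal (exp (-(max (t/(1-y.2) - y.1/y.2) 0))) := by
    filter_upwards [hae] with y hy
    obtain ⟨hu0, hu1⟩ := hy
    have h1u : (0:ℝ) < 1 - y.2 := by linarith
    have key : ((fun x => (x, y)) ⁻¹'
          {p : ℝ × ℝ × ℝ | t < (p.1 + p.2.1 / p.2.2) * (1 - p.2.2)})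
        = Ioi (t/(1-y.2) - y.1/y.2) := by
      ext e
      simp only [mem_preimage, mem_setOf_eq, mem_Ioi]
      rw [← div_lt_iff₀ h1u, sub_lt_iff_lt_add]
    rw [key, expMeasure_Ioi]
  rw [lintegral_congr_ae hcong, lintegral_prod_symm _ hmint.aemeasurable]
  have hptw : ∀ u ∈ Ioo (0:ℝ) 1,
      (∫⁻ e, ENNReal.ofReal (exp (-(max (t/(1-u) - e/u) 0))) ∂(expMeasure 1))
      = ENNReal.ofReal ((exp (-(t*u/(1-u))) - u * exp (-(t/(1-u))))/(1-u)) := by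
    intro u hu
    rw [expMeasure_lintegral _ (by
      apply Measurable.ennreal_ofReal
      apply Real.measurable_exp.comp
      exact (((by fun_prop : Measurable fun e : ℝ => t/(1-u) - e/u).max
        measurable_const)).neg)]
    exact condY ht hu
  rw [setLIntegral_congr_fun measurableSet_Ioo hptw, keyY t ht]

/-- Identity (2) of the paper: `(E₁/U₁)(1 - U₁U₂) =ᵈ (E₁ + E₂/U₁)(1 - U₁)` for
independent rate-one exponential `E₁, E₂` and uniform-`[0,1]` `U₁, U₂`. -/
theorem exp_uniform_identity_small
    {Ω : Type*} [MeasureSpace Ω] [IsProbabilityMeasure (ℙ : Measure Ω)]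
    (E U : Fin 2 → Ω → ℝ)
    (hmE : ∀ i, Measurable (E i)) (hmU : ∀ i, Measurable (U i))
    (hE : ∀ i, Measure.map (E i) ℙ = expMeasure 1)
    (hU : ∀ i, Measure.map (U i) ℙ = volume.restrict (Set.Icc (0 : ℝ) 1))
    (hindep : iIndepFun (Sum.elim E U) ℙ) :
    Measure.map (fun ω => (E 0 ω / U 0 ω) * (1 - U 0 ω * U 1 ω)) ℙ
      = Measure.map (fun ω => (E 0 ω + E 1 ω / U 0 ω) * (1 - U 0 ω)) ℙ := by
  haveI : IsProbabilityMeasure (expMeasure 1) := isProbabilityMeasure_expMeasure one_pos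
  have hU' : ∀ i, Measure.map (U i) ℙ = volume.restrict (Ioo (0:ℝ) 1) :=
    fun i => (hU i).trans (Measure.restrict_congr_set Ioo_ae_eq_Icc).symm
  haveI : IsProbabilityMeasure (volume.restrict (Ioo (0:ℝ) 1)) := by
    constructor
    rw [Measure.restrict_apply_univ, Real.volume_Ioo]
    norm_num
  set μo : Measure ℝ := volume.restrict (Ioo (0:ℝ) 1) with hμo
  have hmsum : ∀ i, Measurable (Sum.elim E U i) := by
    rintro (i | i)
    · exact hmE i
    · exact hmU i
  set φ : ℝ × ℝ × ℝ → ℝ := fun p => p.1 / p.2.1 * (1 - p.2.1 * p.2.2) with hφdef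
  set ψ : ℝ × ℝ × ℝ → ℝ := fun p => (p.1 + p.2.1 / p.2.2) * (1 - p.2.2) with hψdef
  have hφm : Measurable φ := by fun_prop
  have hψm : Measurable ψ := by fun_prop
  -- joint laws
  have hlawU : Measure.map (fun ω => (U 0 ω, U 1 ω)) ℙ = μo.prod μo := by
    rw [(indepFun_iff_map_prod_eq_prod_map_map (hmU 0).aemeasurable
      (hmU 1).aemeasurable).1 (hindep.indepFun (show (Sum.inr 0 : Fin 2 ⊕ Fin 2) ≠ Sum.inr 1 by
        simp [Fin.ext_iff])), hU' 0, hU' 1]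
  have hlawX3 : Measure.map (fun ω => (E 0 ω, (U 0 ω, U 1 ω))) ℙ
      = (expMeasure 1).prod (μo.prod μo) := by
    have hpair : IndepFun (E 0) (fun ω => (U 0 ω, U 1 ω)) ℙ :=
      (hindep.indepFun_prodMk hmsum (Sum.inr 0) (Sum.inr 1) (Sum.inl 0)
        (by simp) (by simp)).symm
    rw [(indepFun_iff_map_prod_eq_prod_map_map (hmE 0).aemeasurable
      ((hmU 0).prodMk (hmU 1)).aemeasurable).1 hpair, hE 0, hlawU]
  have hlawEU : Measure.map (fun ω => (E 1 ω, U 0 ω)) ℙ = (expMeasure 1).prod μo := by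
    rw [(indepFun_iff_map_prod_eq_prod_map_map (hmE 1).aemeasurable
      (hmU 0).aemeasurable).1 (hindep.indepFun (show (Sum.inl 1 : Fin 2 ⊕ Fin 2) ≠ Sum.inr 0 by
        simp)), hE 1, hU' 0]
  have hlawY3 : Measure.map (fun ω => (E 0 ω, (E 1 ω, U 0 ω))) ℙ
      = (expMeasure 1).prod ((expMeasure 1).prod μo) := by
    have hpair : IndepFun (E 0) (fun ω => (E 1 ω, U 0 ω)) ℙ :=
      (hindep.indepFun_prodMk hmsum (Sum.inl 1) (Sum.inr 0) (Sum.inl 0)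
        (by simp [Fin.ext_iff]) (by simp)).symm
    rw [(indepFun_iff_map_prod_eq_prod_map_map (hmE 0).aemeasurable
      ((hmE 1).prodMk (hmU 0)).aemeasurable).1 hpair, hE 0, hlawEU]
  -- rewrite both sides as pushforwards
  have hmapX : Measure.map (fun ω => (E 0 ω / U 0 ω) * (1 - U 0 ω * U 1 ω)) ℙ
      = Measure.map φ ((expMeasure 1).prod (μo.prod μo)) := by
    rw [← hlawX3, Measure.map_map hφm ((hmE 0).prodMk ((hmU 0).prodMk (hmU 1)))]
    rfl
  have hmapY : Measure.map (fun ω => (E 0 ω + E 1 ω / U 0 ω) * (1 - U 0 ω)) ℙ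
      = Measure.map ψ ((expMeasure 1).prod ((expMeasure 1).prod μo)) := by
    rw [← hlawY3, Measure.map_map hψm ((hmE 0).prodMk ((hmE 1).prodMk (hmU 0)))]
    rfl
  rw [hmapX, hmapY]
  haveI : IsProbabilityMeasure (Measure.map φ ((expMeasure 1).prod (μo.prod μo))) :=
    Measure.isProbabilityMeasure_map hφm.aemeasurable
  apply Measure.ext_of_Iic
  intro a
  rw [Measure.map_apply hφm measurableSet_Iic, Measure.map_apply hψm measurableSet_Iic]
  by_cases ha : a ≤ 0
  · -- both sides are zero
    have hGX : ((expMeasure 1).prod (μo.prod μo))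
        (Ioi (0:ℝ) ×ˢ (Ioo (0:ℝ) 1 ×ˢ Ioo (0:ℝ) 1))ᶜ = 0 := by
      rw [measure_compl ((measurableSet_Ioi).prod
        (measurableSet_Ioo.prod measurableSet_Ioo)) (measure_ne_top _ _)]
      rw [Measure.prod_prod, Measure.prod_prod, measure_univ, expMeasure_Ioi]
      rw [hμo, Measure.restrict_apply measurableSet_Ioo, inter_self, Real.volume_Ioo]
      norm_num
    have hGY : ((expMeasure 1).prod ((expMeasure 1).prod μo))
        (Ioi (0:ℝ) ×ˢ (Ioi (0:ℝ) ×ˢ Ioo (0:ℝ) 1))ᶜ = 0 := by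
      rw [measure_compl ((measurableSet_Ioi).prod
        (measurableSet_Ioi.prod measurableSet_Ioo)) (measure_ne_top _ _)]
      rw [Measure.prod_prod, Measure.prod_prod, measure_univ, expMeasure_Ioi]
      rw [hμo, Measure.restrict_apply measurableSet_Ioo, inter_self, Real.volume_Ioo]
      norm_num
    rw [measure_mono_null ?_ hGX, measure_mono_null ?_ hGY]
    · intro p hp hpG
      have he : 0 < p.1 := hpG.1
      have hu0 : 0 < p.2.2 := hpG.2.2.1
      have hu1 : p.2.2 < 1 := hpG.2.2.2
      have he2 : 0 < p.2.1 := hpG.2.1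
      have hppos : 0 < ψ p := by
        apply mul_pos (by positivity) (by linarith)
      have hple : ψ p ≤ a := hp
      linarith
    · intro p hp hpG
      have he : 0 < p.1 := hpG.1
      have hu0 : 0 < p.2.1 := hpG.2.1.1
      have hu1 : p.2.1 < 1 := hpG.2.1.2
      have hv0 : 0 < p.2.2 := hpG.2.2.1
      have hv1 : p.2.2 < 1 := hpG.2.2.2
      have huv : p.2.1 * p.2.2 < 1 := by nlinarith
      have hppos : 0 < φ p := by
        apply mul_pos (div_pos he hu0) (by linarith)
      have hple : φ p ≤ a := hp
      linarith
  · push_neg at ha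
    have hXc : φ ⁻¹' (Iic a) = {p : ℝ × ℝ × ℝ | a < φ p}ᶜ := by
      ext p; simp [not_lt]
    have hYc : ψ ⁻¹' (Iic a) = {p : ℝ × ℝ × ℝ | a < ψ p}ᶜ := by
      ext p; simp [not_lt]
    rw [hXc, hYc, measure_compl (measurableSet_lt measurable_const hφm) (measure_ne_top _ _),
      measure_compl (measurableSet_lt measurable_const hψm) (measure_ne_top _ _),
      measure_univ, measure_univ]
    congr 1
    rw [hμo, hφdef, hψdef]
    rw [survX a ha, survY a ha]
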